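/- For integers n ≥ k ≥ 0 and real (or integer) q ≥ 4, the Gaussian binomial coefficient [n choose k]_q is at most (1 + 2/q)·q^{k(n-k)}. -/

import Mathlib

/-- Gaussian binomial coefficient `[n choose k]_q` as a real number,
with the convention that it is `0` for `k < 0` (and for `k > n`). -/
noncomputable def gbin (q n : ℕ) (k : ℤ) : ℝ :=
  if 0 ≤ k then ∏ i ∈ Finset.range k.toNat, ((q:ℝ)^(n-i) - 1)/((q:ℝ)^(i+1) - 1) else 0

/-- `θ_m = (q^{m+1}-1)/(q-1)`, the number of points of `PG(m,q)`. -/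
noncomputable def theta (q m : ℕ) : ℝ := ((q:ℝ)^(m+1) - 1)/((q:ℝ) - 1)

/-- Weierstrass product inequality -/
lemma aux_weierstrass (k : ℕ) (a : ℕ → ℝ) (h0 : ∀ i, 0 ≤ a i) (h1 : ∀ i, a i ≤ 1) :
    1 - ∑ i ∈ Finset.range k, a i ≤ ∏ i ∈ Finset.range k, (1 - a i) := by
  induction k with
  | zero => simp
  | succ k ih =>
    rw [Finset.sum_range_succ, Finset.prod_range_succ]
    have hprod : (0:ℝ) ≤ ∏ i ∈ Finset.range k, (1 - a i) :=
      Finset.prod_nonneg fun i _ => by linarith [h1 i]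
    have hsum : (0:ℝ) ≤ ∑ i ∈ Finset.range k, a i :=
      Finset.sum_nonneg fun i _ => h0 i
    nlinarith [h0 k, h1 k, ih, mul_le_mul_of_nonneg_right ih (by linarith [h1 k] : (0:ℝ) ≤ 1 - a k)]

lemma aux_geom (k : ℕ) (x : ℝ) (h0 : 0 ≤ x) (h1 : x < 1) :
    ∑ i ∈ Finset.range k, x^(i+1) ≤ x / (1 - x) := by
  induction k with
  | zero => simpa using div_nonneg h0 (by linarith)
  | succ k ih =>
    clear ih
    have h2 : (0:ℝ) < 1 - x := by linarith
    have hne : x ≠ 1 := ne_of_lt h1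
    have hg : ∑ i ∈ Finset.range (k+1), x^(i+1)
        = x * ((1 - x^(k+1))/(1 - x)) := by
      simp only [pow_succ', ← Finset.mul_sum, geom_sum_eq hne]
      rw [← neg_div_neg_eq]
      ring_nf
    rw [hg, mul_div_assoc']
    gcongr
    nlinarith [pow_nonneg h0 (k+1)]

lemma aux_exp_sum (k n : ℕ) (hk : k ≤ n) :
    ∑ i ∈ Finset.range k, (n - i) = (∑ i ∈ Finset.range k, (i + 1)) + k * (n - k) := by
  induction k with
  | zero => simp
  | succ k ih =>
    have hk' : k ≤ n := by omega
    rw [Finset.sum_range_succ, Finset.sum_range_succ, ih hk']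
    have hnk : n - k = (n - (k+1)) + 1 := by omega
    rw [hnk]
    ring

theorem stmt_2 (q n k : ℕ) (hq : 4 ≤ q) (hk : k ≤ n) :
    gbin q n (k:ℤ) ≤ (1 + 2/(q:ℝ)) * (q:ℝ)^(k*(n-k)) := by
  have hq' : (4:ℝ) ≤ (q:ℝ) := by exact_mod_cast hq
  have hq0 : (0:ℝ) < (q:ℝ) := by linarith
  set x : ℝ := 1/(q:ℝ) with hx
  have hx0 : 0 ≤ x := by positivity
  have hx1 : x < 1 := by rw [hx, div_lt_one hq0]; linarith
  have hpow1 : ∀ m : ℕ, (1:ℝ) ≤ (q:ℝ)^m := fun m => one_le_pow₀ (by linarith)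
  have hden : ∀ i : ℕ, (0:ℝ) < (q:ℝ)^(i+1) - 1 := by
    intro i
    have h1 : (1:ℝ) < (q:ℝ) := by linarith
    have h2 : (1:ℝ) < (q:ℝ)^(i+1) := one_lt_pow₀ h1 (by omega)
    linarith
  have hpowpos : ∀ m : ℕ, (0:ℝ) < (q:ℝ)^m := fun m => pow_pos hq0 m
  have h1x : ∀ i : ℕ, 1 - x^(i+1) = ((q:ℝ)^(i+1) - 1)/(q:ℝ)^(i+1) := by
    intro i
    rw [hx, div_pow, one_pow]
    field_simp
  rw [gbin, if_pos (Int.natCast_nonneg k)]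
  simp only [Int.toNat_natCast]
  have step1 : ∏ i ∈ Finset.range k, ((q:ℝ)^(n-i) - 1)/((q:ℝ)^(i+1) - 1)
      ≤ ∏ i ∈ Finset.range k, ((q:ℝ)^(n-i)/((q:ℝ)^(i+1)) * (1 - x^(i+1))⁻¹) := by
    apply Finset.prod_le_prod
    · intro i _
      exact div_nonneg (by linarith [hpow1 (n-i)]) (hden i).le
    · intro i _
      have hrw : (q:ℝ)^(n-i)/((q:ℝ)^(i+1)) * (1 - x^(i+1))⁻¹
          = (q:ℝ)^(n-i)/((q:ℝ)^(i+1) - 1) := by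
        rw [h1x i, inv_div]
        field_simp
      rw [hrw]
      rw [div_le_div_iff_of_pos_right (hden i)]
      linarith
  have split : ∏ i ∈ Finset.range k, ((q:ℝ)^(n-i)/((q:ℝ)^(i+1)) * (1 - x^(i+1))⁻¹)
      = (∏ i ∈ Finset.range k, (q:ℝ)^(n-i)/((q:ℝ)^(i+1)))
        * (∏ i ∈ Finset.range k, (1 - x^(i+1)))⁻¹ := by
    rw [Finset.prod_mul_distrib, ← Finset.prod_inv_distrib]
  have P1 : ∏ i ∈ Finset.range k, (q:ℝ)^(n-i)/((q:ℝ)^(i+1)) = (q:ℝ)^(k*(n-k)) := by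
    rw [Finset.prod_div_distrib, Finset.prod_pow_eq_pow_sum, Finset.prod_pow_eq_pow_sum,
      aux_exp_sum k n hk, pow_add]
    rw [mul_comm, mul_div_assoc, div_self (ne_of_gt (hpowpos _)), mul_one]
  have hsum : ∑ i ∈ Finset.range k, x^(i+1) ≤ 1/((q:ℝ) - 1) := by
    have := aux_geom k x hx0 hx1
    have heq : x/(1-x) = 1/((q:ℝ)-1) := by
      rw [hx]; field_simp
    linarith [heq ▸ this]
  have hprodlb : ((q:ℝ) - 2)/((q:ℝ) - 1) ≤ ∏ i ∈ Finset.range k, (1 - x^(i+1)) := by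
    have hw := aux_weierstrass k (fun i => x^(i+1)) (fun i => pow_nonneg hx0 _)
      (fun i => pow_le_one₀ hx0 hx1.le)
    have h2 : ((q:ℝ) - 2)/((q:ℝ) - 1) = 1 - 1/((q:ℝ)-1) := by
      rw [eq_sub_iff_add_eq, ← add_div]
      rw [div_eq_one_iff_eq (by linarith : (q:ℝ) - 1 ≠ 0)]
      ring
    calc ((q:ℝ) - 2)/((q:ℝ) - 1) ≤ 1 - 1/((q:ℝ)-1) := h2.le
      _ ≤ 1 - ∑ i ∈ Finset.range k, x^(i+1) := by linarith
      _ ≤ _ := hw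
  have hlbpos : (0:ℝ) < ((q:ℝ) - 2)/((q:ℝ) - 1) := by
    apply div_pos <;> linarith
  have P2 : (∏ i ∈ Finset.range k, (1 - x^(i+1)))⁻¹ ≤ 1 + 2/(q:ℝ) := by
    have h1 : (∏ i ∈ Finset.range k, (1 - x^(i+1)))⁻¹ ≤ (((q:ℝ) - 2)/((q:ℝ) - 1))⁻¹ :=
      inv_anti₀ hlbpos hprodlb
    have h2 : (((q:ℝ) - 2)/((q:ℝ) - 1))⁻¹ ≤ 1 + 2/(q:ℝ) := by
      rw [inv_div, div_le_iff₀ (by linarith : (0:ℝ) < (q:ℝ) - 2)]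
      have : (1 + 2/(q:ℝ)) * ((q:ℝ) - 2) = ((q:ℝ)*(q:ℝ) - 4)/(q:ℝ) := by
        field_simp; ring
      rw [this, le_div_iff₀ hq0]
      nlinarith
    linarith
  calc ∏ i ∈ Finset.range k, ((q:ℝ)^(n-i) - 1)/((q:ℝ)^(i+1) - 1)
      ≤ (∏ i ∈ Finset.range k, (q:ℝ)^(n-i)/((q:ℝ)^(i+1)))
        * (∏ i ∈ Finset.range k, (1 - x^(i+1)))⁻¹ := by rw [← split]; exact step1
    _ ≤ (q:ℝ)^(k*(n-k)) * (1 + 2/(q:ℝ)) := by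
        rw [P1]
        exact mul_le_mul_of_nonneg_left P2 (hpowpos _).le
    _ = (1 + 2/(q:ℝ)) * (q:ℝ)^(k*(n-k)) := mul_comm _ _
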